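/- arXiv:2106.05638 — 3 statements merged into one kernel-verified Lean document; each statement's English description precedes it below -/
import Mathlib

section
/- Let S be a finite bichromatic point set, let B be a blue-cross-safe axis-aligned box, let R_L be an upper-right quadrant range [x_L,∞)×[y_L,∞) and R_U a lower-left range (-∞,x_U]×(-∞,y_U] whose boundaries do not intersect any blue-cross-safe leaf box of a cross-safety partition, and suppose the boundaries of B lie inside R_L ∩ R_U. If p is the leftmost point of P = S ∩ R_L ∩ R_U that does not dominate any red point of P, then p lies on the minimal set of P (no point of P is dominated by p), and p is the leftmost point of its blue-cross-safe cell. -/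
open Classical

noncomputable section

abbrev Pt := ℝ × ℝ

/-- An axis-aligned box in the plane. -/
structure Box where
  x0 : ℝ
  x1 : ℝ
  y0 : ℝ
  y1 : ℝ
  hx : x0 < x1
  hy : y0 < y1

/-- The cross of a box: the union of its vertical and horizontal strips. -/
def Box.cross (B : Box) : Set Pt :=
  {p | (B.x0 ≤ p.1 ∧ p.1 ≤ B.x1) ∨ (B.y0 ≤ p.2 ∧ p.2 ≤ B.y1)}

/-- The four open quadrants of a box. -/
def Box.NE (B : Box) : Set Pt := {p | B.x1 < p.1 ∧ B.y1 < p.2}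
def Box.NW (B : Box) : Set Pt := {p | p.1 < B.x0 ∧ B.y1 < p.2}
def Box.SE (B : Box) : Set Pt := {p | B.x1 < p.1 ∧ p.2 < B.y0}
def Box.SW (B : Box) : Set Pt := {p | p.1 < B.x0 ∧ p.2 < B.y0}

/-- Membership in the open interior of a box. -/
def Box.inside (B : Box) (p : Pt) : Prop :=
  B.x0 < p.1 ∧ p.1 < B.x1 ∧ B.y0 < p.2 ∧ p.2 < B.y1

/-- Membership in the closed box. -/
def Box.memClosed (B : Box) (p : Pt) : Prop :=
  B.x0 ≤ p.1 ∧ p.1 ≤ B.x1 ∧ B.y0 ≤ p.2 ∧ p.2 ≤ B.y1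

/-- `p` avoids the boundary lines of the box and of its quadrants. -/
def Box.offBoundary (B : Box) (p : Pt) : Prop :=
  p.1 ≠ B.x0 ∧ p.1 ≠ B.x1 ∧ p.2 ≠ B.y0 ∧ p.2 ≠ B.y1

/-- Minimal points of `T` towards the SW corner of the NE quadrant
(the usual minimal points under coordinatewise domination). -/
def neMinSet (T : Set Pt) : Set Pt :=
  {p ∈ T | ∀ q ∈ T, (q.1 ≤ p.1 ∧ q.2 ≤ p.2) → q = p}

/-- Minimal points of `T` towards the SE corner of the NW quadrant. -/
def nwMinSet (T : Set Pt) : Set Pt :=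
  {p ∈ T | ∀ q ∈ T, (p.1 ≤ q.1 ∧ q.2 ≤ p.2) → q = p}

/-- Minimal points of `T` towards the NW corner of the SE quadrant. -/
def seMinSet (T : Set Pt) : Set Pt :=
  {p ∈ T | ∀ q ∈ T, (q.1 ≤ p.1 ∧ p.2 ≤ q.2) → q = p}

/-- Minimal points of `T` towards the NE corner of the SW quadrant
(the usual maximal points under coordinatewise domination). -/
def swMinSet (T : Set Pt) : Set Pt :=
  {p ∈ T | ∀ q ∈ T, (p.1 ≤ q.1 ∧ p.2 ≤ q.2) → q = p}

/-- `z` lies in the open axis-aligned rectangle spanned by `p` and `q`. -/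
def openRect (p q z : Pt) : Prop :=
  min p.1 q.1 < z.1 ∧ z.1 < max p.1 q.1 ∧ min p.2 q.2 < z.2 ∧ z.2 < max p.2 q.2

/-- `p` and `q` see each other in `S`: the open rectangle they span is empty of `S`. -/
def sees (S : Set Pt) (p q : Pt) : Prop := ∀ z ∈ S, ¬ openRect p q z

/-- `p` participates in `S`: some point of the opposite color sees `p`. -/
def participates (S : Set Pt) (color : Pt → Bool) (p : Pt) : Prop :=
  ∃ q ∈ S, color q ≠ color p ∧ sees S p q

/-- All points of `S` in the cross of `B` have color `c`. -/
def crossSafeFor (S : Set Pt) (color : Pt → Bool) (c : Bool) (B : Box) : Prop :=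
  ∀ p ∈ S, p ∈ B.cross → color p = c

/-- `B` is `c`-safe for `S`: `c`-cross-safe and the four directional minimal
sets of the quadrants only contain points of color `c`. -/
def safeFor (S : Set Pt) (color : Pt → Bool) (c : Bool) (B : Box) : Prop :=
  crossSafeFor S color c B ∧
  (∀ p ∈ neMinSet (S ∩ B.NE), color p = c) ∧
  (∀ p ∈ nwMinSet (S ∩ B.NW), color p = c) ∧
  (∀ p ∈ seMinSet (S ∩ B.SE), color p = c) ∧
  (∀ p ∈ swMinSet (S ∩ B.SW), color p = c)

/-- `B` is safe: red-safe (`true`) or blue-safe (`false`). -/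
def isSafe (S : Set Pt) (color : Pt → Bool) (B : Box) : Prop :=
  safeFor S color true B ∨ safeFor S color false B

/-- General position: pairwise distinct x-coordinates and y-coordinates. -/
def genPos (S : Set Pt) : Prop :=
  ∀ p ∈ S, ∀ q ∈ S, p ≠ q → p.1 ≠ q.1 ∧ p.2 ≠ q.2

/-- `Prt` is a partition of the finite point set `S`. -/
def isPartition (S : Finset Pt) (Prt : Finset (Finset Pt)) : Prop :=
  (∀ C ∈ Prt, C ⊆ S ∧ C.Nonempty) ∧ (∀ p ∈ S, ∃! C, C ∈ Prt ∧ p ∈ C)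

/-- A respectful partition: every part is a singleton or enclosed in a safe box. -/
def respectful (S : Finset Pt) (color : Pt → Bool) (Prt : Finset (Finset Pt)) : Prop :=
  ∀ C ∈ Prt, C.card = 1 ∨
    ∃ B : Box, (∀ q ∈ S, B.offBoundary q) ∧ isSafe (↑S) color B ∧ ∀ q ∈ C, B.inside q

/-- Entropy of a partition of an `n`-point set (logarithms base 2). -/
def partitionEntropy (n : ℕ) (Prt : Finset (Finset Pt)) : ℝ :=
  ∑ C ∈ Prt, ((C.card : ℝ) / n) * Real.logb 2 ((n : ℝ) / (C.card : ℝ))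

/-- Structural entropy: infimum of entropies of respectful partitions. -/
def structEntropy (S : Finset Pt) (color : Pt → Bool) : ℝ :=
  sInf {x : ℝ | ∃ Prt : Finset (Finset Pt),
    isPartition S Prt ∧ respectful S color Prt ∧ x = partitionEntropy S.card Prt}

/-- Lemma "relevant points suffice": the leftmost point `p` of `P = S ∩ R_L ∩ R_U`
dominating no red point of `P` is blue, lies on the minimal set of `P`, and is the
leftmost point of its (blue-cross-safe) cell of the cross-safety partition. -/
theorem stmt12 (S : Finset Pt) (color : Pt → Bool) (hgp : genPos (↑S : Set Pt))
    (xL yL xU yU : ℝ) (hx : xL ≤ xU) (hy : yL ≤ yU)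
    (P : Set Pt)
    (hP : P = {z : Pt | z ∈ (↑S : Set Pt) ∧ xL ≤ z.1 ∧ yL ≤ z.2 ∧ z.1 ≤ xU ∧ z.2 ≤ yU})
    -- a blue-cross-safe box `B` whose boundary lies inside `R_L ∩ R_U`
    (B : Box) (hB : crossSafeFor (↑S : Set Pt) color false B)
    (hBbd : ∀ z : Pt, B.memClosed z →
      (z.1 = B.x0 ∨ z.1 = B.x1 ∨ z.2 = B.y0 ∨ z.2 = B.y1) →
      (xL ≤ z.1 ∧ yL ≤ z.2 ∧ z.1 ≤ xU ∧ z.2 ≤ yU))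
    -- a cross-safety partition of `S` whose blue leaf boxes avoid the boundaries
    -- of `R_L` and `R_U`
    (Prt : Finset (Finset Pt)) (hpart : isPartition S Prt)
    (hboxes : ∀ C ∈ Prt, ∃ Bc : Box,
      (∃ c : Bool, crossSafeFor (↑S : Set Pt) color c Bc) ∧
      (∀ q ∈ C, Bc.inside q) ∧ (∀ q ∈ S, Bc.offBoundary q) ∧
      ((∀ q ∈ C, color q = false) →
        ∀ z : Pt, Bc.memClosed z →
          ¬ ((z.1 = xL ∧ yL ≤ z.2) ∨ (z.2 = yL ∧ xL ≤ z.1)) ∧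
          ¬ ((z.1 = xU ∧ z.2 ≤ yU) ∨ (z.2 = yU ∧ z.1 ≤ xU))))
    -- `p` is the leftmost point of `P` that dominates no red point of `P`
    (p : Pt) (hpP : p ∈ P)
    (hprop : ∀ r ∈ P, color r = true → ¬ (r.1 ≤ p.1 ∧ r.2 ≤ p.2))
    (hleft : ∀ q ∈ P, (∀ r ∈ P, color r = true → ¬ (r.1 ≤ q.1 ∧ r.2 ≤ q.2)) → p.1 ≤ q.1) :
    (∀ q ∈ P, (q.1 ≤ p.1 ∧ q.2 ≤ p.2) → q = p) ∧
    color p = false ∧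
    (∀ C ∈ Prt, p ∈ C → (∀ q ∈ C, color q = false) ∧ ∀ q ∈ C, p.1 ≤ q.1) := by
  obtain ⟨hpS, hpxL, hpyL, hpxU, hpyU⟩ : p ∈ (↑S : Set Pt) ∧ xL ≤ p.1 ∧ yL ≤ p.2 ∧
      p.1 ≤ xU ∧ p.2 ≤ yU := by rw [hP] at hpP; exact hpP
  -- part 1 : minimality
  have hmin : ∀ q ∈ P, (q.1 ≤ p.1 ∧ q.2 ≤ p.2) → q = p := by
    intro q hq hdom
    by_contra hne
    cases hc : color q with
    | true => exact hprop q hq hc hdom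
    | false =>
      have hqS : q ∈ (↑S : Set Pt) := by rw [hP] at hq; exact hq.1
      have hle : p.1 ≤ q.1 := hleft q hq (fun r hr hred hrd =>
        hprop r hr hred ⟨hrd.1.trans hdom.1, hrd.2.trans hdom.2⟩)
      exact (hgp q hqS p hpS hne).1 (le_antisymm hdom.1 hle)
  -- part 2 : p is blue
  have hblue : color p = false := by
    cases hc : color p with
    | false => rfl
    | true => exact absurd (hprop p hpP hc ⟨le_refl _, le_refl _⟩) (by simp)
  refine ⟨hmin, hblue, ?_⟩
  -- part 3 : cell properties
  intro C hC hpC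
  obtain ⟨Bc, ⟨c, hcs⟩, hins, hoff, hbd⟩ := hboxes C hC
  have hCsub : C ⊆ S := (hpart.1 C hC).1
  have hinsp := hins p hpC
  have hcfalse : c = false := by
    have : color p = c := hcs p hpS (Or.inl ⟨hinsp.1.le, hinsp.2.1.le⟩)
    rw [hblue] at this; exact this.symm
  have hCblue : ∀ q ∈ C, color q = false := by
    intro q hq
    have hinsq := hins q hq
    have := hcs q (hCsub hq) (Or.inl ⟨hinsq.1.le, hinsq.2.1.le⟩)
    rwa [hcfalse] at this
  refine ⟨hCblue, ?_⟩
  intro q hqC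
  by_contra hqx
  push_neg at hqx
  have hinsq := hins q hqC
  have hqS : q ∈ (↑S : Set Pt) := hCsub hqC
  have hbd' := hbd hCblue
  -- q lies in the range, hence in P
  have hq1L : xL ≤ q.1 := by
    by_contra h
    push_neg at h
    have hz : Bc.memClosed (xL, p.2) :=
      ⟨(hinsq.1.le.trans h.le), (hpxL.trans hinsp.2.1.le),
        hinsp.2.2.1.le, hinsp.2.2.2.le⟩
    exact (hbd' _ hz).1 (Or.inl ⟨rfl, hpyL⟩)
  have hq2L : yL ≤ q.2 := by
    by_contra h
    push_neg at h
    have hz : Bc.memClosed (p.1, yL) :=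
      ⟨hinsp.1.le, hinsp.2.1.le, (hinsq.2.2.1.le.trans h.le),
        (hpyL.trans hinsp.2.2.2.le)⟩
    exact (hbd' _ hz).1 (Or.inr ⟨rfl, hpxL⟩)
  have hq1U : q.1 ≤ xU := by
    by_contra h
    push_neg at h
    have hz : Bc.memClosed (xU, p.2) :=
      ⟨(hinsp.1.le.trans hpxU), (h.le.trans hinsq.2.1.le),
        hinsp.2.2.1.le, hinsp.2.2.2.le⟩
    exact (hbd' _ hz).2 (Or.inl ⟨rfl, hpyU⟩)
  have hq2U : q.2 ≤ yU := by
    by_contra h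
    push_neg at h
    have hz : Bc.memClosed (p.1, yU) :=
      ⟨hinsp.1.le, hinsp.2.1.le, (hinsp.2.2.1.le.trans hpyU),
        (h.le.trans hinsq.2.2.2.le)⟩
    exact (hbd' _ hz).2 (Or.inr ⟨rfl, hpxU⟩)
  have hqP : q ∈ P := by rw [hP]; exact ⟨hqS, hq1L, hq2L, hq1U, hq2U⟩
  -- q must dominate some red point, otherwise hleft forces p.1 ≤ q.1
  by_cases hq : ∀ r ∈ P, color r = true → ¬ (r.1 ≤ q.1 ∧ r.2 ≤ q.2)
  · exact absurd (hleft q hqP hq) (not_le.mpr hqx)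
  push_neg at hq
  obtain ⟨r, hrP, hred, hr1, hr2⟩ := hq
  have hrS : r ∈ (↑S : Set Pt) := by rw [hP] at hrP; exact hrP.1
  have hr1' : r.1 < Bc.x0 := by
    by_contra h
    push_neg at h
    have := hcs r hrS (Or.inl ⟨h, hr1.trans hinsq.2.1.le⟩)
    rw [hcfalse] at this; rw [this] at hred; exact absurd hred (by simp)
  have hr2' : r.2 < Bc.y0 := by
    by_contra h
    push_neg at h
    have := hcs r hrS (Or.inr ⟨h, hr2.trans hinsq.2.2.2.le⟩)
    rw [hcfalse] at this; rw [this] at hred; exact absurd hred (by simp)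
  exact hprop r hrP hred ⟨(hr1'.trans hinsp.1).le, (hr2'.trans hinsp.2.2.1).le⟩
end
end

section
/- Consider the geometric-type double sum used in the pruning analysis: for any n ≥ 2 and any s with 1 ≤ s ≤ n, Σ_{j ≥ 0, 2^{2^j} ≤ n} min{s, n/2^{2^{j-1}}}·2^{j+1} ≤ C·s·(log₂(n/s)+1) for an absolute constant C. -/
open Classical

lemma aux_sq (u : ℝ) (hu : 0 ≤ u) : u^2 ≤ 16 * (2:ℝ)^u := by
  have hlog : (1/2 : ℝ) ≤ Real.log 2 := by
    have := Real.log_two_gt_d9; linarith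
  have key : ∀ x : ℝ, 0 ≤ x → x^2 ≤ 4 * Real.exp x := by
    intro x hx
    have h1 : x/2 + 1 ≤ Real.exp (x/2) := by
      have := Real.add_one_le_exp (x/2); linarith
    have h2 : Real.exp x = Real.exp (x/2) * Real.exp (x/2) := by
      rw [← Real.exp_add]; ring_nf
    nlinarith [Real.exp_pos (x/2)]
  have h3 : (Real.log 2 * u)^2 ≤ 4 * (2:ℝ)^u := by
    rw [Real.rpow_def_of_pos (by norm_num : (0:ℝ) < 2)]
    exact key (Real.log 2 * u) (by positivity)
  have h4 : u * (1/2) ≤ u * Real.log 2 := by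
    exact mul_le_mul_of_nonneg_left hlog hu
  nlinarith [sq_nonneg (Real.log 2 * u), sq_nonneg u]

lemma aux_peak (m t : ℝ) (hm : 0 ≤ m) (ht : m ≤ t) :
    (2:ℝ)^(m - t) * t^2 ≤ 32 * (m+1)^2 := by
  have hu : 0 ≤ t - m := by linarith
  have hXpos : 0 < (2:ℝ)^(t-m) := Real.rpow_pos_of_pos two_pos _
  have h2u : (1:ℝ) ≤ (2:ℝ)^(t-m) := by
    have := Real.rpow_le_rpow_of_exponent_le (one_le_two) hu
    rwa [Real.rpow_zero] at this
  have hq : (t-m)^2 ≤ 16 * (2:ℝ)^(t-m) := aux_sq (t-m) hu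
  have key : t^2 ≤ (2:ℝ)^(t-m) * (32*(m+1)^2) := by
    nlinarith [sq_nonneg (t - 2*m), mul_nonneg (mul_nonneg hm hm) (sub_nonneg.mpr h2u),
      mul_nonneg hm (sub_nonneg.mpr h2u)]
  rw [show m - t = -(t-m) by ring, Real.rpow_neg (le_of_lt two_pos),
    inv_mul_le_iff₀ hXpos]
  exact key

lemma key2 (m t t₁ : ℝ) (hm : 0 ≤ m) (h1 : m < t₁) (h2 : 1/2 ≤ t₁) (h3 : t₁ ≤ t) :
    (2:ℝ)^(m - t) * (4*t) ≤ 384 * (m+1) * (t₁/t) := by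
  have ht0 : (0:ℝ) < t := by linarith
  have ht13 : (m+1)/3 ≤ t₁ := by
    rcases le_or_gt (1/2) m with h | h <;> linarith
  have hpk := aux_peak m t hm (le_trans (le_of_lt h1) h3)
  have h5 : (2:ℝ)^(m-t) * (4*t) * t ≤ 384*(m+1)*t₁ := by
    nlinarith [mul_nonneg (by linarith : (0:ℝ) ≤ m+1) (by linarith : 0 ≤ t₁ - (m+1)/3)]
  rw [show (384:ℝ)*(m+1)*(t₁/t) = 384*(m+1)*t₁/t by ring, le_div_iff₀ ht0]
  exact h5

/-- Doubly-exponential pruning sum: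
`Σ_{j ≥ 0, 2^{2^j} ≤ n} min(s, n/2^{2^{j-1}})·2^{j+1} ≤ C·s·(log₂(n/s)+1)`. -/
theorem stmt16 : ∃ C : ℝ, 0 < C ∧
    ∀ (n : ℕ) (s : ℝ), 2 ≤ n → 1 ≤ s → s ≤ (n : ℝ) →
      (∑ j ∈ (Finset.range n).filter (fun j => 2 ^ 2 ^ j ≤ n),
          min s ((n : ℝ) / (2 : ℝ) ^ ((2 : ℝ) ^ ((j : ℝ) - 1))) * (2 : ℝ) ^ (j + 1))
        ≤ C * s * (Real.logb 2 ((n : ℝ) / s) + 1) := by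
  refine ⟨1000, by norm_num, ?_⟩
  intro n s hn hs hsn
  have hs0 : (0:ℝ) < s := by linarith
  have hn2 : (2:ℝ) ≤ (n:ℝ) := by exact_mod_cast hn
  have hn0 : (0:ℝ) < (n:ℝ) := by linarith
  set m := Real.logb 2 ((n:ℝ)/s) with hmdef
  have hm0 : 0 ≤ m := Real.logb_nonneg one_lt_two (by rw [le_div_iff₀ hs0]; linarith)
  have h2m : (2:ℝ)^m = (n:ℝ)/s := Real.rpow_logb two_pos (by norm_num) (by positivity)
  have hns : (n:ℝ) = s * (2:ℝ)^m := by rw [h2m]; field_simp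
  set f : ℕ → ℝ := fun j =>
    min s ((n : ℝ) / (2 : ℝ) ^ ((2 : ℝ) ^ ((j : ℝ) - 1))) * (2 : ℝ) ^ (j + 1) with hf
  have hfnonneg : ∀ j, 0 ≤ f j := by
    intro j
    apply mul_nonneg
    · exact le_min (le_of_lt hs0) (by positivity) |>.trans (min_le_min le_rfl le_rfl) |>.trans_eq rfl
    · positivity
  set S := (Finset.range n).filter (fun j => 2 ^ 2 ^ j ≤ n) with hS
  set S1 := S.filter (fun j : ℕ => (2:ℝ)^((j:ℝ)-1) ≤ m) with hS1
  set S2 := S.filter (fun j : ℕ => ¬ (2:ℝ)^((j:ℝ)-1) ≤ m) with hS2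
  have hsplit : ∑ j ∈ S, f j = ∑ j ∈ S1, f j + ∑ j ∈ S2, f j :=
    (Finset.sum_filter_add_sum_filter_not S _ f).symm
  -- Bound on the first part
  have hSum1 : ∑ j ∈ S1, f j ≤ 8 * s * (m+1) := by
    rcases S1.eq_empty_or_nonempty with h | h
    · rw [h, Finset.sum_empty]; positivity
    · set J := S1.max' h with hJ
      have hJQ : (2:ℝ)^((J:ℝ)-1) ≤ m := (Finset.mem_filter.mp (S1.max'_mem h)).2
      have step1 : ∑ j ∈ S1, f j ≤ ∑ j ∈ S1, s * (2:ℝ)^(j+1) := by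
        apply Finset.sum_le_sum
        intro j hj
        exact mul_le_mul_of_nonneg_right (min_le_left _ _) (by positivity)
      have step2 : ∑ j ∈ S1, s * (2:ℝ)^(j+1) ≤
          ∑ j ∈ Finset.range (J+1), s * (2:ℝ)^(j+1) := by
        apply Finset.sum_le_sum_of_subset_of_nonneg
        · intro j hj
          exact Finset.mem_range.mpr (Nat.lt_succ_of_le (S1.le_max' j hj))
        · intros; positivity
      have step3 : ∑ j ∈ Finset.range (J+1), s * (2:ℝ)^(j+1)
          = s * (2 * ((2:ℝ)^(J+1) - 1)) := by
        rw [← Finset.mul_sum]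
        congr 1
        have : ∀ j, (2:ℝ)^(j+1) = 2 * (2:ℝ)^j := fun j => by ring
        rw [Finset.sum_congr rfl (fun j _ => this j), ← Finset.mul_sum,
          geom_sum_eq (by norm_num : (2:ℝ) ≠ 1)]
        norm_num
      have step4 : (2:ℝ)^(J+1) ≤ 4 * m := by
        have e : (2:ℝ)^(J+1) = 4 * (2:ℝ)^((J:ℝ)-1) := by
          rw [← Real.rpow_natCast 2 (J+1)]
          push_cast
          rw [show ((J:ℝ)+1) = ((J:ℝ)-1) + 2 by ring, Real.rpow_add two_pos]
          norm_num
          try ring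
        rw [e]; linarith
      calc ∑ j ∈ S1, f j ≤ s * (2 * ((2:ℝ)^(J+1) - 1)) := by
            rw [← step3]; exact le_trans step1 step2
        _ ≤ s * (8 * m) := by nlinarith
        _ ≤ 8 * s * (m+1) := by nlinarith
  -- Bound on the second part
  have hSum2 : ∑ j ∈ S2, f j ≤ 768 * s * (m+1) := by
    rcases S2.eq_empty_or_nonempty with h | h
    · rw [h, Finset.sum_empty]; positivity
    · set j₁ := S2.min' h with hj₁
      have hj₁m : m < (2:ℝ)^((j₁:ℝ)-1) :=
        not_le.mp (Finset.mem_filter.mp (S2.min'_mem h)).2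
      have hj₁half : (1/2:ℝ) ≤ (2:ℝ)^((j₁:ℝ)-1) := by
        have h1 : (2:ℝ)^(-1:ℝ) ≤ (2:ℝ)^((j₁:ℝ)-1) := by
          apply Real.rpow_le_rpow_of_exponent_le one_le_two
          have : (0:ℝ) ≤ (j₁:ℝ) := Nat.cast_nonneg _
          linarith
        rwa [Real.rpow_neg_one, show ((2:ℝ))⁻¹ = 1/2 by norm_num] at h1
      have pointwise : ∀ j ∈ S2, f j ≤ 384*(m+1)*s * (1/2:ℝ)^(j - j₁) := by
        intro j hj
        have hjge : j₁ ≤ j := S2.min'_le j hj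
        have hQ : m < (2:ℝ)^((j:ℝ)-1) :=
          not_le.mp (Finset.mem_filter.mp hj).2
        have hmono : (2:ℝ)^((j₁:ℝ)-1) ≤ (2:ℝ)^((j:ℝ)-1) := by
          apply Real.rpow_le_rpow_of_exponent_le one_le_two
          have : (j₁:ℝ) ≤ (j:ℝ) := by exact_mod_cast hjge
          linarith
        have e1 : (n:ℝ)/(2:ℝ)^((2:ℝ)^((j:ℝ)-1))
            = s * (2:ℝ)^(m - (2:ℝ)^((j:ℝ)-1)) := by
          have hr : (2:ℝ)^(m - (2:ℝ)^((j:ℝ)-1))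
              = (2:ℝ)^m / (2:ℝ)^((2:ℝ)^((j:ℝ)-1)) := Real.rpow_sub two_pos _ _
          rw [hr, hns, mul_div_assoc]
        have e2 : (2:ℝ)^(j+1) = 4 * (2:ℝ)^((j:ℝ)-1) := by
          rw [← Real.rpow_natCast 2 (j+1)]
          push_cast
          rw [show ((j:ℝ)+1) = ((j:ℝ)-1) + 2 by ring, Real.rpow_add two_pos]
          norm_num
          try ring
        have hkey := key2 m ((2:ℝ)^((j:ℝ)-1)) ((2:ℝ)^((j₁:ℝ)-1)) hm0 hj₁m hj₁half hmono
        have e3 : (2:ℝ)^((j₁:ℝ)-1) / (2:ℝ)^((j:ℝ)-1) = (1/2:ℝ)^(j - j₁) := by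
          rw [← Real.rpow_sub two_pos]
          rw [show ((j₁:ℝ)-1) - ((j:ℝ)-1) = -(((j - j₁ : ℕ)):ℝ) by
            push_cast [Nat.cast_sub hjge]; ring]
          rw [Real.rpow_neg (le_of_lt two_pos), Real.rpow_natCast, one_div, inv_pow]
        calc f j ≤ ((n:ℝ)/(2:ℝ)^((2:ℝ)^((j:ℝ)-1))) * (2:ℝ)^(j+1) :=
              mul_le_mul_of_nonneg_right (min_le_right _ _) (by positivity)
          _ = s * ((2:ℝ)^(m - (2:ℝ)^((j:ℝ)-1)) * (4 * (2:ℝ)^((j:ℝ)-1))) := by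
              rw [e1, e2]; ring
          _ ≤ s * (384*(m+1)*((2:ℝ)^((j₁:ℝ)-1)/(2:ℝ)^((j:ℝ)-1))) :=
              mul_le_mul_of_nonneg_left hkey (le_of_lt hs0)
          _ = 384*(m+1)*s * (1/2:ℝ)^(j - j₁) := by rw [e3]; ring
      have hsum : ∑ j ∈ S2, (1/2:ℝ)^(j - j₁) ≤ 2 := by
        have hsub : S2 ⊆ Finset.Ico j₁ n := by
          intro j hj
          refine Finset.mem_Ico.mpr ⟨S2.min'_le j hj, ?_⟩
          have : j ∈ Finset.range n :=
            (Finset.mem_filter.mp (Finset.mem_filter.mp hj).1).1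
          exact Finset.mem_range.mp this
        calc ∑ j ∈ S2, (1/2:ℝ)^(j - j₁)
            ≤ ∑ j ∈ Finset.Ico j₁ n, (1/2:ℝ)^(j - j₁) :=
              Finset.sum_le_sum_of_subset_of_nonneg hsub (by intros; positivity)
          _ = ∑ i ∈ Finset.range (n - j₁), (1/2:ℝ)^i := by
              rw [Finset.sum_Ico_eq_sum_range]
              exact Finset.sum_congr rfl (fun i _ => by
                congr 1; omega)
          _ ≤ 2 := by
              rw [geom_sum_eq (by norm_num : (1/2:ℝ) ≠ 1)]
              have : (0:ℝ) ≤ (1/2:ℝ)^(n - j₁) := by positivity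
              rw [div_le_iff_of_neg (by norm_num : (1/2:ℝ) - 1 < 0)]
              linarith
      calc ∑ j ∈ S2, f j ≤ ∑ j ∈ S2, 384*(m+1)*s * (1/2:ℝ)^(j - j₁) :=
            Finset.sum_le_sum pointwise
        _ = 384*(m+1)*s * ∑ j ∈ S2, (1/2:ℝ)^(j - j₁) := by rw [Finset.mul_sum]
        _ ≤ 384*(m+1)*s * 2 := by
            apply mul_le_mul_of_nonneg_left hsum (by positivity)
        _ = 768 * s * (m+1) := by ring
  calc ∑ j ∈ S, f j = ∑ j ∈ S1, f j + ∑ j ∈ S2, f j := hsplit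
    _ ≤ 8 * s * (m+1) + 768 * s * (m+1) := add_le_add hSum1 hSum2
    _ ≤ 1000 * s * (m+1) := by nlinarith
end

section
/- Let T_red be a binary tree where each internal node's point set of size m is split into two parts each of size at most ⌈m/2⌉, with root set of size n. If every leaf is 'full' (holds exactly as many indices as points) and each index is assigned to exactly one leaf, then Σ_{leaves B} |B|·depth(B) ≥ c·Σ_{leaves B} |B|·log₂(n/|B|) for an absolute constant c > 0, where |B| denotes the number of points in leaf B. -/
open Classical

noncomputable section

/-- A binary split tree over finite planar point sets. -/
inductive SplitTree
  | leaf : Finset Pt → SplitTree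
  | node : SplitTree → SplitTree → SplitTree

/-- The point set of a split tree. -/
def SplitTree.pts : SplitTree → Finset Pt
  | .leaf s => s
  | .node l r => l.pts ∪ r.pts

/-- Validity: at every internal node the point set is split into two disjoint parts,
each of size at most `⌈m/2⌉`. -/
def SplitTree.valid : SplitTree → Prop
  | .leaf _ => True
  | .node l r => Disjoint l.pts r.pts ∧
      l.pts.card ≤ ((l.pts ∪ r.pts).card + 1) / 2 ∧
      r.pts.card ≤ ((l.pts ∪ r.pts).card + 1) / 2 ∧
      l.valid ∧ r.valid

/-- Sum over the leaves of `f` applied to the leaf's point set and its depth. -/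
def SplitTree.leafSum (f : Finset Pt → ℕ → ℝ) : SplitTree → ℕ → ℝ
  | .leaf s, d => f s d
  | .node l r, d => l.leafSum f (d + 1) + r.leafSum f (d + 1)

/- ### Auxiliary lemmas -/

lemma leafSum_mono (f g : Finset Pt → ℕ → ℝ) :
    ∀ (T : SplitTree) (d : ℕ), (∀ s k, d ≤ k → s ⊆ T.pts → f s k ≤ g s k) →
      T.leafSum f d ≤ T.leafSum g d
  | .leaf s, d, h => h s d le_rfl (by simp [SplitTree.pts])
  | .node l r, d, h => by
      simp only [SplitTree.leafSum]
      have hl := leafSum_mono f g l (d + 1) (fun s k hk hs =>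
        h s k (Nat.le_of_succ_le hk)
          (by simp only [SplitTree.pts]; exact hs.trans Finset.subset_union_left))
      have hr := leafSum_mono f g r (d + 1) (fun s k hk hs =>
        h s k (Nat.le_of_succ_le hk)
          (by simp only [SplitTree.pts]; exact hs.trans Finset.subset_union_right))
      linarith

lemma leafSum_congr (f g : Finset Pt → ℕ → ℝ) (T : SplitTree) (d : ℕ)
    (h : ∀ s k, d ≤ k → s ⊆ T.pts → f s k = g s k) :
    T.leafSum f d = T.leafSum g d :=
  le_antisymm (leafSum_mono f g T d (fun s k hk hs => (h s k hk hs).le))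
    (leafSum_mono g f T d (fun s k hk hs => (h s k hk hs).ge))

lemma leafSum_add (f g : Finset Pt → ℕ → ℝ) :
    ∀ (T : SplitTree) (d : ℕ),
      T.leafSum (fun s k => f s k + g s k) d = T.leafSum f d + T.leafSum g d
  | .leaf s, d => rfl
  | .node l r, d => by
      simp only [SplitTree.leafSum, leafSum_add f g l (d + 1),
        leafSum_add f g r (d + 1)]
      ring

lemma leafSum_smul (c : ℝ) (f : Finset Pt → ℕ → ℝ) :
    ∀ (T : SplitTree) (d : ℕ),
      T.leafSum (fun s k => c * f s k) d = c * T.leafSum f d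
  | .leaf s, d => rfl
  | .node l r, d => by
      simp only [SplitTree.leafSum, leafSum_smul c f l (d + 1),
        leafSum_smul c f r (d + 1)]
      ring

/-- The key pointwise bound. -/
lemma pointwise_step (n m sc : ℕ) (hsm : sc ≤ m)
    (hn : n ≤ 4 * m) (hmn : m ≤ n) :
    (sc : ℝ) * Real.logb 2 ((n : ℝ) / (sc : ℝ)) ≤
      (sc : ℝ) * Real.logb 2 ((m : ℝ) / (sc : ℝ)) + 2 * sc := by
  rcases eq_or_ne sc 0 with h0 | h0
  · subst h0; simp
  have hsc : (0 : ℝ) < sc := by exact_mod_cast Nat.pos_of_ne_zero h0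
  have hm : (0 : ℝ) < m := by
    exact_mod_cast lt_of_lt_of_le (Nat.pos_of_ne_zero h0) hsm
  have hstep : Real.logb 2 ((n : ℝ) / (sc : ℝ)) ≤
      Real.logb 2 ((m : ℝ) / (sc : ℝ)) + 2 := by
    have hnn : (0 : ℝ) < n := lt_of_lt_of_le hm (by exact_mod_cast hmn)
    have h1 : Real.logb 2 ((n : ℝ) / (sc : ℝ)) ≤
        Real.logb 2 (4 * ((m : ℝ) / (sc : ℝ))) := by
      apply Real.logb_le_logb_of_le (by norm_num : (1:ℝ) < 2) (by positivity)
      rw [← mul_div_assoc]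
      gcongr
      exact_mod_cast hn
    have h2 : Real.logb 2 (4 * ((m : ℝ) / (sc : ℝ))) =
        2 + Real.logb 2 ((m : ℝ) / (sc : ℝ)) := by
      rw [Real.logb_mul (by norm_num) (by positivity),
        show (4 : ℝ) = 2 ^ (2 : ℕ) by norm_num, Real.logb_pow,
        Real.logb_self_eq_one (by norm_num)]
      push_cast; ring
    linarith
  nlinarith [hstep, hsc.le]

/-- Descending into a child whose point count is at least `(n-1)/2`. -/
lemma branch (T : SplitTree) (n d : ℕ)
    (h1 : T.pts.card ≤ n) (h2 : n ≤ 2 * T.pts.card + 1)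
    (ih : T.leafSum (fun s _ => (s.card : ℝ) *
            Real.logb 2 ((T.pts.card : ℝ) / (s.card : ℝ))) (d + 1)
          ≤ T.leafSum (fun s k => (s.card : ℝ) *
            (2 * ((k : ℝ) - ((d + 1 : ℕ) : ℝ)) + 1)) (d + 1)) :
    T.leafSum (fun s _ => (s.card : ℝ) *
        Real.logb 2 ((n : ℝ) / (s.card : ℝ))) (d + 1)
      ≤ T.leafSum (fun s k => (s.card : ℝ) *
        (2 * ((k : ℝ) - (d : ℝ)) + 1)) (d + 1) := by
  have mono1 : T.leafSum (fun s _ => (s.card : ℝ) *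
      Real.logb 2 ((n : ℝ) / (s.card : ℝ))) (d + 1)
      ≤ T.leafSum (fun s k => (s.card : ℝ) *
        Real.logb 2 ((T.pts.card : ℝ) / (s.card : ℝ)) + 2 * (s.card : ℝ)) (d + 1) := by
    apply leafSum_mono
    intro s k _ hs
    rcases eq_or_ne s.card 0 with h0 | h0
    · simp [h0]
    · have hsm : s.card ≤ T.pts.card := Finset.card_le_card hs
      exact pointwise_step n T.pts.card s.card hsm
        (by have := Nat.pos_of_ne_zero h0; omega) h1
  have add1 := leafSum_add
    (fun s _ => (s.card : ℝ) * Real.logb 2 ((T.pts.card : ℝ) / (s.card : ℝ)))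
    (fun s _ => 2 * (s.card : ℝ)) T (d + 1)
  have add2 := leafSum_add
    (fun s k => (s.card : ℝ) * (2 * ((k : ℝ) - ((d + 1 : ℕ) : ℝ)) + 1))
    (fun s _ => 2 * (s.card : ℝ)) T (d + 1)
  have mono2 : T.leafSum (fun s k =>
      (s.card : ℝ) * (2 * ((k : ℝ) - ((d + 1 : ℕ) : ℝ)) + 1) + 2 * (s.card : ℝ)) (d + 1)
      = T.leafSum (fun s k => (s.card : ℝ) * (2 * ((k : ℝ) - (d : ℝ)) + 1)) (d + 1) := by
    apply leafSum_congr
    intro s k _ _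
    push_cast
    ring
  linarith

/-- Main induction: every leaf's entropy term is bounded by `2·(relative depth)+1`. -/
lemma key : ∀ (T : SplitTree), T.valid → ∀ d : ℕ,
    T.leafSum (fun s _ => (s.card : ℝ) *
        Real.logb 2 ((T.pts.card : ℝ) / (s.card : ℝ))) d
      ≤ T.leafSum (fun s k => (s.card : ℝ) *
        (2 * ((k : ℝ) - (d : ℝ)) + 1)) d
  | .leaf s, _, d => by
      simp only [SplitTree.leafSum, SplitTree.pts]
      rcases eq_or_ne s.card 0 with h0 | h0
      · simp [h0]
      · rw [div_self (by exact_mod_cast h0), Real.logb_one]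
        simp
  | .node l r, hv, d => by
      obtain ⟨hdisj, hlc, hrc, hvl, hvr⟩ := hv
      have hcard : (l.pts ∪ r.pts).card = l.pts.card + r.pts.card :=
        Finset.card_union_of_disjoint hdisj
      have hu : (SplitTree.node l r).pts = l.pts ∪ r.pts := rfl
      simp only [SplitTree.leafSum]
      have Bl := branch l (SplitTree.node l r).pts.card d
        (by rw [hu, hcard]; omega) (by rw [hu, hcard]; omega) (key l hvl (d + 1))
      have Br := branch r (SplitTree.node l r).pts.card d
        (by rw [hu, hcard]; omega) (by rw [hu, hcard]; omega) (key r hvr (d + 1))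
      exact add_le_add Bl Br

/-- Depth-sum lower bound: `Σ_leaves |B|·depth(B) ≥ c·Σ_leaves |B|·log₂(n/|B|)`
for an absolute constant `c > 0`, where `n` is the number of points at the root. -/
theorem stmt19 : ∃ c : ℝ, 0 < c ∧
    ∀ T : SplitTree, T.valid →
      c * T.leafSum (fun s _ => (s.card : ℝ) *
            Real.logb 2 ((T.pts.card : ℝ) / (s.card : ℝ))) 0
        ≤ T.leafSum (fun s d => (s.card : ℝ) * (d : ℝ)) 0 := by
  refine ⟨1/3, by norm_num, ?_⟩
  intro T hv
  cases T with
  | leaf s =>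
      simp only [SplitTree.leafSum, SplitTree.pts]
      rcases eq_or_ne s.card 0 with h0 | h0
      · simp [h0]
      · rw [div_self (by exact_mod_cast h0), Real.logb_one]
        simp
  | node l r =>
      have hk := key (SplitTree.node l r) hv 0
      have h2 : (SplitTree.node l r).leafSum (fun s k => (s.card : ℝ) *
          (2 * ((k : ℝ) - ((0 : ℕ) : ℝ)) + 1)) 0
          ≤ (SplitTree.node l r).leafSum
            (fun s k => 3 * ((s.card : ℝ) * (k : ℝ))) 0 := by
        simp only [SplitTree.leafSum]
        have hpt : ∀ (s : Finset Pt) (k : ℕ), 1 ≤ k →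
            (s.card : ℝ) * (2 * ((k : ℝ) - ((0 : ℕ) : ℝ)) + 1)
            ≤ 3 * ((s.card : ℝ) * (k : ℝ)) := by
          intro s k hk1
          have hk1' : (1 : ℝ) ≤ (k : ℝ) := by exact_mod_cast hk1
          have hs0 : (0 : ℝ) ≤ (s.card : ℝ) := Nat.cast_nonneg _
          push_cast
          nlinarith
        have ml := leafSum_mono _ _ l 1 (fun s k hk1 _ => hpt s k hk1)
        have mr := leafSum_mono _ _ r 1 (fun s k hk1 _ => hpt s k hk1)
        linarith
      have h3 := leafSum_smul 3 (fun s k => (s.card : ℝ) * (k : ℝ))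
        (SplitTree.node l r) 0
      have h4 := hk.trans h2
      rw [h3] at h4
      linarith
end
end
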